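/- Let θ₁,…,θ_N ∈ Θ, α > 0, real numbers β₁,…,β_N, and suppose z_i := μ_ρ(B(θ_i,α)) > 0 for each i, where B(θ_i,α) is the closed ball of radius α around θ_i. Define b_α(θ) := Σ_{i=1}^N (β_i/z_i) ρ(θ) 1{‖θ − θ_i‖₂ ≤ α}. Then for every s ∈ S, | ∫_Θ b_α(θ) φ(s;θ) dθ − Σ_{i=1}^N β_i φ(s;θ_i) | ≤ L · (D+1) · α · Σ_{i=1}^N |β_i|. -/

import Mathlib

open MeasureTheory ProbabilityTheory

/-- The random basis function `φ(s;θ) = φ̄(⟨(1,s), θ⟩)`. -/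
noncomputable def phi (d : ℕ) (phibar : ℝ → ℝ)
    (θ : EuclideanSpace ℝ (Fin (d + 1))) (s : EuclideanSpace ℝ (Fin d)) : ℝ :=
  phibar (θ 0 + ∑ i : Fin d, s i * θ i.succ)

/-- The sampling measure `μ_ρ` on `Θ = ℝ^{d+1}`, with density `ρ` w.r.t. Lebesgue. -/
noncomputable def muRho (d : ℕ) (ρ : EuclideanSpace ℝ (Fin (d + 1)) → ℝ) :
    Measure (EuclideanSpace ℝ (Fin (d + 1))) :=
  volume.withDensity fun θ => ENNReal.ofReal (ρ θ)

/-- Replacing the sampled basis functions `φ(s;θᵢ)` by their normalized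
local averages `b_α(θ) = Σᵢ (βᵢ/zᵢ) ρ(θ) 1{‖θ−θᵢ‖ ≤ α}` incurs a uniform error of at most
`L (D+1) α Σᵢ |βᵢ|`. -/
theorem stmt_12
    {d : ℕ} (Sset : Set (EuclideanSpace ℝ (Fin d)))
    (D : ℝ) (hD : ∀ s ∈ Sset, Real.sqrt (1 + ‖s‖ ^ 2) ≤ D + 1)
    (L : NNReal) (phibar : ℝ → ℝ) (hLip : LipschitzWith L phibar)
    (hphibar_bdd : ∀ x, |phibar x| ≤ 1)
    (ρ : EuclideanSpace ℝ (Fin (d + 1)) → ℝ) (hρ_meas : Measurable ρ)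
    (hρ_pos : ∀ θ, 0 < ρ θ) (hρ_prob : IsProbabilityMeasure (muRho d ρ))
    (N : ℕ) (θ : Fin N → EuclideanSpace ℝ (Fin (d + 1)))
    (α : ℝ) (hα0 : 0 < α)
    (β : Fin N → ℝ)
    (z : Fin N → ℝ)
    (hz : ∀ i, z i = (muRho d ρ (Metric.closedBall (θ i) α)).toReal)
    (hz_pos : ∀ i, 0 < z i)
    (bα : EuclideanSpace ℝ (Fin (d + 1)) → ℝ)
    (hbα : ∀ t, bα t = ∑ i : Fin N, (β i / z i) * ρ t * (if dist t (θ i) ≤ α then 1 else 0)) :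
    ∀ s ∈ Sset,
      |(∫ t, bα t * phi d phibar t s) - ∑ i : Fin N, β i * phi d phibar (θ i) s|
        ≤ (L : ℝ) * (D + 1) * α * ∑ i : Fin N, |β i| := by
  intro s hs
  set f : EuclideanSpace ℝ (Fin (d + 1)) → ℝ := fun t => phi d phibar t s with hfdef
  set B : Fin N → Set (EuclideanSpace ℝ (Fin (d + 1))) :=
    fun i => Metric.closedBall (θ i) α with hBdef
  set C : ℝ := (L : ℝ) * (D + 1) * α with hCdef
  -- the weight vector w = (1, s)
  set w : EuclideanSpace ℝ (Fin (d + 1)) :=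
    WithLp.toLp 2 (Fin.cons 1 (fun i => s i) : Fin (d + 1) → ℝ) with hwdef
  have hw0 : w 0 = 1 := rfl
  have hwsucc : ∀ i : Fin d, w i.succ = s i := fun i => rfl
  have hDpos : (0:ℝ) ≤ D + 1 := le_trans (Real.sqrt_nonneg _) (hD s hs)
  have hC0 : 0 ≤ C := by positivity
  -- f t = phibar ⟪w, t⟫
  have hfinner : ∀ t, f t = phibar (inner ℝ w t : ℝ) := by
    intro t
    simp only [hfdef, phi, PiLp.inner_apply, RCLike.inner_apply, conj_trivial,
      Fin.sum_univ_succ, hw0, hwsucc, one_mul]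
    rw [mul_one]; congr 2; exact Finset.sum_congr rfl fun i _ => mul_comm _ _
  have hwnorm : ‖w‖ = Real.sqrt (1 + ‖s‖ ^ 2) := by
    rw [EuclideanSpace.norm_eq]
    congr 1
    rw [Fin.sum_univ_succ]
    simp only [hw0, hwsucc, norm_one, one_pow]
    congr 1
    have : ‖s‖ = Real.sqrt (∑ i, ‖s i‖ ^ 2) := EuclideanSpace.norm_eq s
    rw [this, Real.sq_sqrt]
    positivity
  -- measurability of f
  have hfmeas : Measurable f := by
    have h1 : Measurable fun t : EuclideanSpace ℝ (Fin (d + 1)) => (inner ℝ w t : ℝ) :=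
      (innerSL ℝ w).continuous.measurable
    have h2 : f = fun t => phibar (inner ℝ w t : ℝ) := funext hfinner
    rw [h2]
    exact hLip.continuous.measurable.comp h1
  have hfbdd : ∀ t, |f t| ≤ 1 := fun t => by rw [hfinner]; exact hphibar_bdd _
  -- pointwise Lipschitz bound on the ball
  have hkey : ∀ i : Fin N, ∀ t ∈ B i, |f t - f (θ i)| ≤ C := by
    intro i t ht
    rw [hfinner, hfinner]
    have h1 : |phibar (inner ℝ w t : ℝ) - phibar (inner ℝ w (θ i) : ℝ)|
        ≤ (L : ℝ) * |(inner ℝ w t : ℝ) - inner ℝ w (θ i)| := by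
      have := hLip.dist_le_mul (inner ℝ w t : ℝ) (inner ℝ w (θ i))
      simpa [Real.dist_eq] using this
    refine h1.trans ?_
    have h2 : (inner ℝ w t : ℝ) - inner ℝ w (θ i) = inner ℝ w (t - θ i) := by
      rw [inner_sub_right]
    rw [h2]
    have h3 : |(inner ℝ w (t - θ i) : ℝ)| ≤ ‖w‖ * ‖t - θ i‖ := by
      simpa using abs_real_inner_le_norm w (t - θ i)
    have h4 : ‖t - θ i‖ ≤ α := by
      simpa [hBdef, Metric.mem_closedBall, dist_eq_norm] using ht
    have h5 : ‖w‖ ≤ D + 1 := hwnorm ▸ hD s hs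
    calc (L : ℝ) * |(inner ℝ w (t - θ i) : ℝ)| ≤ (L : ℝ) * (‖w‖ * ‖t - θ i‖) := by
          exact mul_le_mul_of_nonneg_left h3 L.coe_nonneg
      _ ≤ (L : ℝ) * ((D + 1) * α) := by
          apply mul_le_mul_of_nonneg_left _ L.coe_nonneg
          exact mul_le_mul h5 h4 (norm_nonneg _) hDpos
      _ = C := by rw [hCdef]; ring
  -- integrability of ρ
  have hρ_nonneg : ∀ t, 0 ≤ ρ t := fun t => (hρ_pos t).le
  have hlint : ∫⁻ t, ENNReal.ofReal (ρ t) ∂(volume) = 1 := by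
    have := hρ_prob.measure_univ
    rw [muRho, withDensity_apply _ MeasurableSet.univ, Measure.restrict_univ] at this
    exact this
  have hρ_int : Integrable ρ := by
    rw [← lintegral_ofReal_ne_top_iff_integrable hρ_meas.aestronglyMeasurable
      (Filter.Eventually.of_forall hρ_nonneg)]
    rw [hlint]; exact ENNReal.one_ne_top
  have hBmeas : ∀ i, MeasurableSet (B i) := fun i => Metric.isClosed_closedBall.measurableSet
  -- z i = ∫ t in B i, ρ t
  have hz' : ∀ i, z i = ∫ t in B i, ρ t := by
    intro i
    rw [hz i, muRho, withDensity_apply _ (hBmeas i)]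
    rw [integral_eq_lintegral_of_nonneg_ae (Filter.Eventually.of_forall hρ_nonneg)
      hρ_meas.aestronglyMeasurable]
  -- integrability of ρ * f  and ρ * const
  have hρf_int : Integrable (fun t => ρ t * f t) := by
    refine hρ_int.mono ((hρ_meas.mul hfmeas).aestronglyMeasurable) ?_
    refine Filter.Eventually.of_forall fun t => ?_
    rw [Real.norm_eq_abs, Real.norm_eq_abs, abs_mul]
    calc |ρ t| * |f t| ≤ |ρ t| * 1 := mul_le_mul_of_nonneg_left (hfbdd t) (abs_nonneg _)
      _ = |ρ t| := mul_one _
  -- Step 1: rewrite the integral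
  have hstep1 : (∫ t, bα t * f t) = ∑ i : Fin N, (β i / z i) * ∫ t in B i, ρ t * f t := by
    have hpt : ∀ t, bα t * f t
        = ∑ i : Fin N, (β i / z i) * (B i).indicator (fun t => ρ t * f t) t := by
      intro t
      rw [hbα t, Finset.sum_mul]
      refine Finset.sum_congr rfl fun i _ => ?_
      by_cases h : dist t (θ i) ≤ α
      · rw [if_pos h, Set.indicator_of_mem (by simpa [hBdef, Metric.mem_closedBall] using h)]
        ring
      · rw [if_neg h, Set.indicator_of_notMem
          (by simpa [hBdef, Metric.mem_closedBall] using h)]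
        ring
    rw [show (fun t => bα t * f t) = fun t =>
      ∑ i : Fin N, (β i / z i) * (B i).indicator (fun t => ρ t * f t) t from funext hpt]
    rw [integral_finset_sum]
    · refine Finset.sum_congr rfl fun i _ => ?_
      rw [integral_const_mul, integral_indicator (hBmeas i)]
    · intro i _
      exact ((integrable_indicator_iff (hBmeas i)).2 hρf_int.integrableOn).const_mul _
  -- Step 2: rewrite the sum
  have hstep2 : ∑ i : Fin N, β i * f (θ i)
      = ∑ i : Fin N, (β i / z i) * ∫ t in B i, ρ t * f (θ i) := by
    refine Finset.sum_congr rfl fun i _ => ?_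
    have hzne : z i ≠ 0 := (hz_pos i).ne'
    rw [integral_mul_const, ← hz' i]
    field_simp
  -- combine: difference
  have hdiff : (∫ t, bα t * f t) - ∑ i : Fin N, β i * f (θ i)
      = ∑ i : Fin N, (β i / z i) * ∫ t in B i, ρ t * (f t - f (θ i)) := by
    rw [hstep1, hstep2, ← Finset.sum_sub_distrib]
    refine Finset.sum_congr rfl fun i _ => ?_
    rw [← mul_sub]
    congr 1
    rw [← integral_sub hρf_int.integrableOn (hρ_int.integrableOn.mul_const _)]
    refine setIntegral_congr_fun (hBmeas i) fun t _ => ?_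
    ring
  rw [show (∫ t, bα t * phi d phibar t s) - ∑ i : Fin N, β i * phi d phibar (θ i) s
      = (∫ t, bα t * f t) - ∑ i : Fin N, β i * f (θ i) from rfl, hdiff]
  -- bound each term
  have hterm : ∀ i : Fin N, |(β i / z i) * ∫ t in B i, ρ t * (f t - f (θ i))| ≤ C * |β i| := by
    intro i
    rw [abs_mul]
    have hIbound : |∫ t in B i, ρ t * (f t - f (θ i))| ≤ z i * C := by
      have h1 : |∫ t in B i, ρ t * (f t - f (θ i))| ≤ ∫ t in B i, |ρ t * (f t - f (θ i))| := by
        simpa [Real.norm_eq_abs, abs_mul] using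
          norm_integral_le_integral_norm (μ := volume.restrict (B i))
            (fun t => ρ t * (f t - f (θ i)))
      refine h1.trans ?_
      have h2 : ∫ t in B i, |ρ t * (f t - f (θ i))| ≤ ∫ t in B i, ρ t * C := by
        refine setIntegral_mono_on ?_ ?_ (hBmeas i) ?_
        · have hint2 : Integrable (fun t => ρ t * (f t - f (θ i))) :=
            (hρf_int.sub (hρ_int.mul_const _)).congr
              (Filter.Eventually.of_forall fun t => (mul_sub _ _ _).symm)
          exact hint2.abs.integrableOn
        · exact hρ_int.integrableOn.mul_const _
        · intro t ht
          rw [abs_mul, abs_of_nonneg (hρ_nonneg t)]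
          exact mul_le_mul_of_nonneg_left (hkey i t ht) (hρ_nonneg t)
      refine h2.trans ?_
      rw [integral_mul_const, ← hz' i]
    have : |β i / z i| = |β i| / z i := by
      rw [abs_div, abs_of_pos (hz_pos i)]
    rw [this]
    calc |β i| / z i * |∫ t in B i, ρ t * (f t - f (θ i))|
        ≤ |β i| / z i * (z i * C) := by
          exact mul_le_mul_of_nonneg_left hIbound
            (div_nonneg (abs_nonneg _) (hz_pos i).le)
      _ = C * |β i| := by
          have hzne : z i ≠ 0 := (hz_pos i).ne'
          field_simp
  calc |∑ i : Fin N, (β i / z i) * ∫ t in B i, ρ t * (f t - f (θ i))|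
      ≤ ∑ i : Fin N, |(β i / z i) * ∫ t in B i, ρ t * (f t - f (θ i))| :=
        Finset.abs_sum_le_sum_abs _ _
    _ ≤ ∑ i : Fin N, C * |β i| := Finset.sum_le_sum fun i _ => hterm i
    _ = (L : ℝ) * (D + 1) * α * ∑ i : Fin N, |β i| := by rw [← Finset.mul_sum, hCdef]
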